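/- arXiv:2602.21594 — 8 statements merged into one kernel-verified Lean document; each statement's English description precedes it below -/
import Mathlib

section
/- Along solutions of Ẋ = (1-Y)X, Ẏ = (X-Y)Y, the function V(X,Y) = Ψ(X) + Ψ(Y) + Ψ(1/X) + Ψ(Y/X) has derivative V̇ = -(X-1)²/X - (Y-1)², i.e., for all X, Y > 0, ∂V/∂X·(1-Y)X + ∂V/∂Y·(X-Y)Y = -(X-1)²/X - (Y-1)². -/
noncomputable def Ψ (S : ℝ) : ℝ := S - 1 - Real.log S

lemma hasDerivAt_Ψ_comp {u : ℝ → ℝ} {u' x : ℝ} (hu : HasDerivAt u u' x)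
    (hx : u x ≠ 0) : HasDerivAt (fun x => Ψ (u x)) (u' - u' / u x) x := by
  have h := ((hu.sub_const 1).sub ((Real.hasDerivAt_log hx).comp x hu))
  simpa [Ψ, div_eq_mul_inv, mul_comm, Pi.sub_def, Function.comp_def] using h

theorem V_strict_derivative (X Y : ℝ) (hX : 0 < X) (hY : 0 < Y) :
    deriv (fun x => Ψ x + Ψ Y + Ψ (1 / x) + Ψ (Y / x)) X * ((1 - Y) * X)
      + deriv (fun y => Ψ X + Ψ y + Ψ (1 / X) + Ψ (y / X)) Y * ((X - Y) * Y)
      = -(X - 1) ^ 2 / X - (Y - 1) ^ 2 := by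
  have hX0 : X ≠ 0 := hX.ne'
  have hY0 : Y ≠ 0 := hY.ne'
  have h1 : HasDerivAt (fun x : ℝ => 1 / x) (-(1 / X ^ 2)) X := by
    simpa using (hasDerivAt_inv hX0)
  have h2 : HasDerivAt (fun x : ℝ => Y / x) (Y * -(1 / X ^ 2)) X := by
    simpa [div_eq_mul_inv] using (hasDerivAt_inv hX0).const_mul Y
  have h3 : HasDerivAt (fun y : ℝ => y / X) (1 / X) Y := by
    simpa using (hasDerivAt_id Y).div_const X
  have hfx : HasDerivAt (fun x => Ψ x + Ψ Y + Ψ (1 / x) + Ψ (Y / x))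
      ((1 - 1 / X) + (-(1 / X ^ 2) - -(1 / X ^ 2) / (1 / X))
        + (Y * -(1 / X ^ 2) - Y * -(1 / X ^ 2) / (Y / X))) X := by
    simpa [Pi.add_def] using (((hasDerivAt_Ψ_comp (hasDerivAt_id X) hX0).add_const _).add
      (hasDerivAt_Ψ_comp h1 (by positivity))).add
      (hasDerivAt_Ψ_comp h2 (by positivity))
  have hfy : HasDerivAt (fun y => Ψ X + Ψ y + Ψ (1 / X) + Ψ (y / X))
      ((1 - 1 / Y) + (1 / X - (1 / X) / (Y / X))) Y := by
    simpa [Pi.add_def] using (((hasDerivAt_Ψ_comp (hasDerivAt_id Y) hY0).const_add _).add_const _).add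
      (hasDerivAt_Ψ_comp h3 (by positivity))
  rw [hfx.deriv, hfy.deriv]
  field_simp
  ring
end

section
/- The function V(X,Y) = (X-1)²/X + Y - 1 - ln Y + Y/X - 1 - ln(Y/X) is radially unbounded on the open first quadrant: V(X,Y) → ∞ whenever X → 0⁺, Y → 0⁺, X → ∞, or Y → ∞. -/
noncomputable def V (X Y : ℝ) : ℝ :=
  (X - 1) ^ 2 / X + Y - 1 - Real.log Y + Y / X - 1 - Real.log (Y / X)

lemma sub_log_nonneg {t : ℝ} (ht : 0 < t) : 0 ≤ t - 1 - Real.log t := by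
  have := Real.log_le_sub_one_of_pos ht; linarith

lemma V_lower (X Y : ℝ) (hX : 0 < X) (hY : 0 < Y) :
    (X - 1) ^ 2 / X ≤ V X Y ∧ Y - 1 - Real.log Y ≤ V X Y := by
  have h1 : 0 ≤ (X - 1) ^ 2 / X := div_nonneg (sq_nonneg _) hX.le
  have h2 := sub_log_nonneg hY
  have h3 := sub_log_nonneg (div_pos hY hX)
  unfold V; constructor <;> linarith

theorem V_radially_unbounded :
    ∀ M : ℝ, ∃ K : Set (ℝ × ℝ), IsCompact K ∧ K ⊆ {p : ℝ × ℝ | 0 < p.1 ∧ 0 < p.2} ∧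
      ∀ p : ℝ × ℝ, 0 < p.1 → 0 < p.2 → p ∉ K → M < V p.1 p.2 := by
  intro M
  set C : ℝ := max M 0 + 1 with hCdef
  have hC1 : 1 ≤ C := by
    have := le_max_right M 0; simp only [hCdef]; linarith
  have hC0 : 0 < C := by linarith
  have hCM : M < C := lt_of_le_of_lt (le_max_left M 0) (by simp only [hCdef]; linarith)
  set a : ℝ := min (1/2) (min (1/(4*C)) (Real.exp (-(C+1)))) with hadef
  set b : ℝ := max 2 (max (4*C) (max 16 (2*(C+1)))) with hbdef
  have ha : 0 < a := lt_min (by norm_num) (lt_min (by positivity) (Real.exp_pos _))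
  have ha1 : a ≤ 1/2 := min_le_left _ _
  have ha2 : a ≤ 1/(4*C) := le_trans (min_le_right _ _) (min_le_left _ _)
  have ha3 : a ≤ Real.exp (-(C+1)) := le_trans (min_le_right _ _) (min_le_right _ _)
  have hb1 : (2:ℝ) ≤ b := le_max_left _ _
  have hb2 : 4*C ≤ b := le_trans (le_max_left _ _) (le_max_right _ _)
  have hb3 : (16:ℝ) ≤ b := le_trans (le_trans (le_max_left _ _) (le_max_right _ _)) (le_max_right _ _)
  have hb4 : 2*(C+1) ≤ b := le_trans (le_trans (le_max_right _ _) (le_max_right _ _)) (le_max_right _ _)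
  refine ⟨Set.Icc a b ×ˢ Set.Icc a b, isCompact_Icc.prod isCompact_Icc, ?_, ?_⟩
  · rintro ⟨x, y⟩ ⟨hx, hy⟩
    exact ⟨lt_of_lt_of_le ha hx.1, lt_of_lt_of_le ha hy.1⟩
  · rintro ⟨X, Y⟩ hX hY hK
    simp only [Set.prodMk_mem_set_prod_eq, Set.mem_Icc, not_and_or, not_le] at hK
    obtain ⟨hVX, hVY⟩ := V_lower X Y hX hY
    have key : C < V X Y := by
      rcases hK with (h | h) | (h | h)
      · -- X < a
        refine lt_of_lt_of_le ?_ hVX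
        rw [lt_div_iff₀ hX]
        have hXa2 : X < 1/(4*C) := lt_of_lt_of_le h ha2
        have h4 : X * (4*C) < 1 := (lt_div_iff₀ (by positivity)).mp hXa2
        have hX2 : X < 1/2 := lt_of_lt_of_le h ha1
        nlinarith [sq_nonneg (X - 1)]
      · -- b < X
        refine lt_of_lt_of_le ?_ hVX
        rw [lt_div_iff₀ hX]
        have h1 : 4*C < X := lt_of_le_of_lt hb2 h
        have h2 : (2:ℝ) < X := lt_of_le_of_lt hb1 h
        nlinarith [mul_nonneg (by linarith : (0:ℝ) ≤ 3*X - 2) (by linarith : (0:ℝ) ≤ X - 2),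
          mul_pos hX (by linarith : (0:ℝ) < X - 4*C)]
      · -- Y < a
        refine lt_of_lt_of_le ?_ hVY
        have hYa : Y < Real.exp (-(C+1)) := lt_of_lt_of_le h ha3
        have hlog : Real.log Y < -(C+1) := by have := Real.log_lt_log hY hYa; rwa [Real.log_exp] at this
        linarith
      · -- b < Y
        refine lt_of_lt_of_le ?_ hVY
        have h16 : (16:ℝ) < Y := lt_of_le_of_lt hb3 h
        have hbY : 2*(C+1) < Y := lt_of_le_of_lt hb4 h
        have hsq : Real.sqrt Y * Real.sqrt Y = Y := Real.mul_self_sqrt hY.le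
        have hs4 : (4:ℝ) ≤ Real.sqrt Y := by
          nlinarith [Real.sqrt_nonneg Y]
        have hsle : Real.sqrt Y ≤ Y / 4 := by nlinarith
        have hlogs : Real.log (Real.sqrt Y) = Real.log Y / 2 := Real.log_sqrt hY.le
        have hls := Real.log_le_sub_one_of_pos (Real.sqrt_pos.mpr hY)
        have hlog : Real.log Y ≤ Y/2 - 2 := by
          rw [hlogs] at hls; linarith
        linarith
    linarith
end

section
/- For ε ∈ (0,1), along solutions of Ẋ = -(1+ε)(Y-1)X, Ẏ = [X-1-ε(Y-1)]Y, the function V₁(X,Y) = Ψ(X) + (1+ε)Ψ(Y) has derivative V̇₁ = -(1+ε)ε(Y-1)², i.e., for all X, Y > 0, (1-1/X)·(-(1+ε)(Y-1)X) + (1+ε)(1-1/Y)·(X-1-ε(Y-1))Y = -(1+ε)ε(Y-1)². -/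
theorem V1_derivative_both (ε X Y : ℝ) (hε : ε ∈ Set.Ioo (0:ℝ) 1)
    (hX : 0 < X) (hY : 0 < Y) :
    (1 - 1 / X) * (-(1 + ε) * (Y - 1) * X)
      + (1 + ε) * (1 - 1 / Y) * ((X - 1 - ε * (Y - 1)) * Y)
      = -(1 + ε) * ε * (Y - 1) ^ 2 := by
  field_simp
  ring
end

section
/- For ε ∈ (0,1) and α = ε/(1+ε), along solutions of Ẋ = -(1+ε)(Y-1)X, Ẏ = [X-1-ε(Y-1)]Y, the function V(X,Y) = Ψ(X) + (1+ε)Ψ(Y) + Π(X) + Ψ(Y/X^α) has derivative V̇ = -(X-1)(X^α - 1)/X^α - (1+ε)ε(Y-1)², which is negative for all (X,Y) ≠ (1,1) with X, Y > 0. -/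
noncomputable def Pi' (ε X : ℝ) : ℝ :=
  X ^ (-(ε / (1 + ε))) * (X - 1 - ((1 + ε) / ε) * (X ^ (ε / (1 + ε)) - 1))

theorem V_both_strict (ε X Y : ℝ) (hε : ε ∈ Set.Ioo (0:ℝ) 1) (hX : 0 < X) (hY : 0 < Y) :
    (deriv (fun x => Ψ x + (1 + ε) * Ψ Y + Pi' ε x + Ψ (Y / x ^ (ε / (1 + ε)))) X
        * (-(1 + ε) * (Y - 1) * X)
      + deriv (fun y => Ψ X + (1 + ε) * Ψ y + Pi' ε X + Ψ (y / X ^ (ε / (1 + ε)))) Y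
        * ((X - 1 - ε * (Y - 1)) * Y)
      = -(X - 1) * (X ^ (ε / (1 + ε)) - 1) / X ^ (ε / (1 + ε))
        - (1 + ε) * ε * (Y - 1) ^ 2)
    ∧ ((X, Y) ≠ (1, 1) →
        -(X - 1) * (X ^ (ε / (1 + ε)) - 1) / X ^ (ε / (1 + ε))
          - (1 + ε) * ε * (Y - 1) ^ 2 < 0) := by
  obtain ⟨hε0, hε1⟩ := hε
  have h1ε : (0:ℝ) < 1 + ε := by linarith
  set α := ε / (1 + ε) with hαdef
  have hα0 : 0 < α := div_pos hε0 h1ε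
  have hα1 : α < 1 := by rw [hαdef, div_lt_one h1ε]; linarith
  have hXne : X ≠ 0 := ne_of_gt hX
  have hA : 0 < X ^ α := Real.rpow_pos_of_pos hX α
  have hAne : X ^ α ≠ 0 := ne_of_gt hA
  have hΨ : ∀ p : ℝ, 0 < p → HasDerivAt Ψ (1 - 1/p) p := by
    intro p hp
    have := ((hasDerivAt_id p).sub_const 1).sub (Real.hasDerivAt_log hp.ne')
    simp only [one_div]
    exact this
  -- derivative in x
  have hpow : HasDerivAt (fun x : ℝ => x ^ α) (α * X ^ (α - 1)) X :=
    Real.hasDerivAt_rpow_const (Or.inl hXne)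
  have hpowneg : HasDerivAt (fun x : ℝ => x ^ (-α)) (-α * X ^ (-α - 1)) X :=
    Real.hasDerivAt_rpow_const (Or.inl hXne)
  have hinner : HasDerivAt (fun x : ℝ => x - 1 - ((1 + ε) / ε) * (x ^ α - 1))
      (1 - ((1 + ε) / ε) * (α * X ^ (α - 1))) X :=
    ((hasDerivAt_id X).sub_const 1).sub ((hpow.sub_const 1).const_mul _)
  have hPi : HasDerivAt (fun x : ℝ => Pi' ε x)
      (-α * X ^ (-α - 1) * (X - 1 - ((1 + ε) / ε) * (X ^ α - 1))
        + X ^ (-α) * (1 - ((1 + ε) / ε) * (α * X ^ (α - 1)))) X := by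
    have := hpowneg.mul hinner
    exact this
  have hu : HasDerivAt (fun x : ℝ => Y / x ^ α)
      ((0 * X ^ α - Y * (α * X ^ (α - 1))) / (X ^ α) ^ 2) X :=
    (hasDerivAt_const X Y).div hpow hAne
  have hcomp : HasDerivAt (fun x : ℝ => Ψ (Y / x ^ α))
      ((1 - 1 / (Y / X ^ α)) * ((0 * X ^ α - Y * (α * X ^ (α - 1))) / (X ^ α) ^ 2)) X := by
    have := (hΨ _ (div_pos hY hA)).comp X hu
    exact this
  have hfx : HasDerivAt (fun x => Ψ x + (1 + ε) * Ψ Y + Pi' ε x + Ψ (Y / x ^ α))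
      ((1 - 1/X)
        + (-α * X ^ (-α - 1) * (X - 1 - ((1 + ε) / ε) * (X ^ α - 1))
          + X ^ (-α) * (1 - ((1 + ε) / ε) * (α * X ^ (α - 1))))
        + (1 - 1 / (Y / X ^ α)) * ((0 * X ^ α - Y * (α * X ^ (α - 1))) / (X ^ α) ^ 2)) X :=
    (((hΨ X hX).add_const _).add hPi).add hcomp
  -- derivative in y
  have hcy : HasDerivAt (fun y : ℝ => Ψ (y / X ^ α))
      ((1 - 1 / (Y / X ^ α)) * (1 / X ^ α)) Y := by
    have hv : HasDerivAt (fun y : ℝ => y / X ^ α) (1 / X ^ α) Y := by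
      simpa using (hasDerivAt_id Y).div_const (X ^ α)
    have := (hΨ _ (div_pos hY hA)).comp Y hv
    exact this
  have hgy : HasDerivAt (fun y => Ψ X + (1 + ε) * Ψ y + Pi' ε X + Ψ (y / X ^ α))
      (((1 + ε) * (1 - 1/Y)) + (1 - 1 / (Y / X ^ α)) * (1 / X ^ α)) Y := by
    have h2 : HasDerivAt (fun y : ℝ => Ψ X + (1 + ε) * Ψ y) ((1 + ε) * (1 - 1/Y)) Y :=
      ((hΨ Y hY).const_mul _).const_add _
    exact ((h2.add_const (Pi' ε X)).add hcy)
  rw [hfx.deriv, hgy.deriv]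
  have e1 : X ^ (-α) = (X ^ α)⁻¹ := Real.rpow_neg hX.le α
  have e2 : X ^ (α - 1) = X ^ α / X := by
    rw [Real.rpow_sub hX, Real.rpow_one]
  have e3 : X ^ (-α - 1) = (X ^ α)⁻¹ / X := by
    rw [Real.rpow_sub hX, Real.rpow_one, Real.rpow_neg hX.le]
  constructor
  · rw [e1, e2, e3]
    have hεne : ε ≠ 0 := ne_of_gt hε0
    have h1εne : (1 + ε) ≠ 0 := ne_of_gt h1ε
    have hYne : Y ≠ 0 := ne_of_gt hY
    rw [hαdef]
    field_simp
    ring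
  · intro hne
    have hXY : X ≠ 1 ∨ Y ≠ 1 := by
      by_contra h
      push_neg at h
      exact hne (by simp [h.1, h.2])
    have hsq : 0 ≤ (1 + ε) * ε * (Y - 1) ^ 2 := by positivity
    have hterm : 0 ≤ (X - 1) * (X ^ α - 1) := by
      rcases lt_trichotomy X 1 with h | h | h
      · have : X ^ α < 1 := Real.rpow_lt_one hX.le h hα0
        nlinarith
      · simp [h]
      · have : 1 < X ^ α := Real.one_lt_rpow_iff_of_pos hX |>.2 (Or.inl ⟨h, hα0⟩)
        nlinarith
    rcases hXY with h | h
    · have hterm' : 0 < (X - 1) * (X ^ α - 1) := by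
        rcases lt_or_gt_of_ne h with h | h
        · have : X ^ α < 1 := Real.rpow_lt_one hX.le h hα0
          nlinarith
        · have : 1 < X ^ α := Real.one_lt_rpow_iff_of_pos hX |>.2 (Or.inl ⟨h, hα0⟩)
          nlinarith
      have : 0 < (X - 1) * (X ^ α - 1) / X ^ α := div_pos hterm' hA
      linarith [this, hsq, (by ring_nf : -(X - 1) * (X ^ α - 1) / X ^ α = -((X - 1) * (X ^ α - 1) / X ^ α))]
    · have hsq' : 0 < (1 + ε) * ε * (Y - 1) ^ 2 := by
        have hYn : Y - 1 ≠ 0 := sub_ne_zero.2 h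
        positivity
      have hterm' : 0 ≤ (X - 1) * (X ^ α - 1) / X ^ α := div_nonneg hterm hA.le
      linarith [(by ring_nf : -(X - 1) * (X ^ α - 1) / X ^ α = -((X - 1) * (X ^ α - 1) / X ^ α))]
end

section
/- Along solutions of Ẋ = (1-Y)X, Ẏ = X - Y² (the predator-prey system Ẋ = (1-Y)X, Ẏ = (X-U)Y with forwarding feedback U = X + Y - X/Y), the function V(X,Y) = X/Y - 1 - ln X + Y - 1 satisfies V̇ = -½[(X/Y - 1)² + (Y-1)² + (X/Y - Y)²]. -/
theorem V_forwarding_derivative (X Y : ℝ) (hX : 0 < X) (hY : 0 < Y) :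
    deriv (fun x => x / Y - 1 - Real.log x + Y - 1) X * ((1 - Y) * X)
      + deriv (fun y => X / y - 1 - Real.log X + y - 1) Y * (X - Y ^ 2)
      = -(1 / 2) * ((X / Y - 1) ^ 2 + (Y - 1) ^ 2 + (X / Y - Y) ^ 2) := by
  have h1 : deriv (fun x => x / Y - 1 - Real.log x + Y - 1) X = 1 / Y - 1 / X := by
    have : HasDerivAt (fun x => x / Y - 1 - Real.log x + Y - 1) (1 / Y - 1 / X) X := by
      have := ((hasDerivAt_id X).div_const Y).sub_const 1
      have := (this.sub (Real.hasDerivAt_log hX.ne')).add_const Y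
      simpa [one_div] using this.sub_const 1
    exact this.deriv
  have h2 : deriv (fun y => X / y - 1 - Real.log X + y - 1) Y = -X / Y ^ 2 + 1 := by
    have : HasDerivAt (fun y => X / y - 1 - Real.log X + y - 1) (-X / Y ^ 2 + 1) Y := by
      have h0 : HasDerivAt (fun y : ℝ => X / y) (-X / Y ^ 2) Y := by
        simpa [div_eq_mul_inv, neg_div, mul_comm, mul_assoc, mul_left_comm] using
          (hasDerivAt_inv hY.ne').const_mul X
      have h := h0.sub_const 1
      have h := (h.sub_const (Real.log X)).add (hasDerivAt_id Y)
      simpa using h.sub_const 1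
    exact this.deriv
  rw [h1, h2]
  field_simp
  ring
end

section
/- Along solutions of Ẋ = (1-Y)X, Ẏ = (X-U)Y with U = Y + (Y-X)/Y, the function V(X,Y) = Ψ(1/X) + Ψ(Y/X) satisfies V̇ = -(X-1)²/X - (Y-X)²/(XY), which is negative for all (X,Y) ≠ (1,1) with X, Y > 0. -/
lemma hasDerivAt_Psi {S : ℝ} (hS : S ≠ 0) : HasDerivAt Ψ (1 - S⁻¹) S := by
  unfold Ψ
  have h := ((hasDerivAt_id S).sub_const 1).sub (Real.hasDerivAt_log hS)
  simp at h; exact h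

theorem V_backstepping_derivative (X Y : ℝ) (hX : 0 < X) (hY : 0 < Y) :
    (deriv (fun x => Ψ (1 / x) + Ψ (Y / x)) X * ((1 - Y) * X)
      + deriv (fun y => Ψ (1 / X) + Ψ (y / X)) Y
          * ((X - (Y + (Y - X) / Y)) * Y)
      = -(X - 1) ^ 2 / X - (Y - X) ^ 2 / (X * Y))
    ∧ ((X, Y) ≠ (1, 1) → -(X - 1) ^ 2 / X - (Y - X) ^ 2 / (X * Y) < 0) := by
  have hX0 : X ≠ 0 := ne_of_gt hX
  have hY0 : Y ≠ 0 := ne_of_gt hY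
  have hXinv : (1 : ℝ) / X ≠ 0 := by positivity
  have hYX : Y / X ≠ 0 := by positivity
  have h1 : HasDerivAt (fun x : ℝ => 1 / x) (-(X ^ 2)⁻¹) X := by
    simpa [one_div] using hasDerivAt_inv hX0
  have h2 : HasDerivAt (fun x : ℝ => Y / x) (Y * -(X ^ 2)⁻¹) X := by
    simpa [div_eq_mul_inv] using (hasDerivAt_inv hX0).const_mul Y
  have hf : HasDerivAt (fun x => Ψ (1 / x) + Ψ (Y / x))
      ((1 - (1 / X)⁻¹) * -(X ^ 2)⁻¹ + (1 - (Y / X)⁻¹) * (Y * -(X ^ 2)⁻¹)) X :=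
    ((hasDerivAt_Psi hXinv).comp X h1).add ((hasDerivAt_Psi hYX).comp X h2)
  have hg : HasDerivAt (fun y => Ψ (1 / X) + Ψ (y / X))
      ((1 - (Y / X)⁻¹) * (1 / X)) Y := by
    have h3 : HasDerivAt (fun y : ℝ => y / X) (1 / X) Y := by
      simpa using (hasDerivAt_id Y).div_const X
    exact ((hasDerivAt_const Y (Ψ (1 / X))).add
      (((hasDerivAt_Psi hYX).comp Y h3))).congr_deriv (zero_add _)
  constructor
  · rw [hf.deriv, hg.deriv]
    field_simp
    ring
  · intro hne
    have key : 0 < (X - 1) ^ 2 / X + (Y - X) ^ 2 / (X * Y) := by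
      by_cases hX1 : X = 1
      · have hY1 : Y ≠ 1 := by
          intro hY1; exact hne (by simp [hX1, hY1])
        have : (Y - X) ^ 2 > 0 := by
          have : Y - X ≠ 0 := by rw [hX1]; intro h; exact hY1 (by linarith)
          positivity
        have h1 : 0 < (Y - X) ^ 2 / (X * Y) := by positivity
        have h2 : 0 ≤ (X - 1) ^ 2 / X := by positivity
        linarith
      · have : (X - 1) ^ 2 > 0 := by
          have : X - 1 ≠ 0 := sub_ne_zero.mpr hX1
          positivity
        have h1 : 0 < (X - 1) ^ 2 / X := by positivity
        have h2 : 0 ≤ (Y - X) ^ 2 / (X * Y) := by positivity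
        linarith
    have h3 : -(X - 1) ^ 2 / X - (Y - X) ^ 2 / (X * Y)
        = -((X - 1) ^ 2 / X + (Y - X) ^ 2 / (X * Y)) := by ring
    linarith
end

section
/- For V(X,Y) = Ψ(1/X) + Ψ(Y/X), the open-loop derivative along Ẋ = (1-Y)X, Ẏ = (X-U)Y equals L(X,Y) + G(X,Y)U with L(X,Y) = (-(X-1)² + Y(Y-X))/X and G(X,Y) = (X-Y)/X; moreover, whenever G(X,Y) > 0 (i.e., X > Y) and (X,Y) ≠ (1,1), L(X,Y) < 0. -/
theorem V_backstepping_open_loop (X Y : ℝ) (hX : 0 < X) (hY : 0 < Y) :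
    (∀ U : ℝ,
      deriv (fun x => Ψ (1 / x) + Ψ (Y / x)) X * ((1 - Y) * X)
        + deriv (fun y => Ψ (1 / X) + Ψ (y / X)) Y * ((X - U) * Y)
        = (-(X - 1) ^ 2 + Y * (Y - X)) / X + ((X - Y) / X) * U)
    ∧ (Y < X → (X, Y) ≠ (1, 1) → (-(X - 1) ^ 2 + Y * (Y - X)) / X < 0) := by
  have hX0 := hX.ne'
  have hY0 := hY.ne'
  have h1 : HasDerivAt (fun x : ℝ => 1 / x) (-1 / X ^ 2) X := by
    have := hasDerivAt_inv hX0; simp only [one_div]; convert this using 1; rfl; ring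
  have h2 : HasDerivAt (fun x : ℝ => Y / x) (Y * (-1 / X ^ 2)) X := by
    simpa [div_eq_mul_inv, mul_comm, one_div] using h1.const_mul Y
  have hne1 : (1 : ℝ) / X ≠ 0 := one_div_ne_zero hX0
  have hne2 : Y / X ≠ 0 := div_ne_zero hY0 hX0
  have hd1 : HasDerivAt (fun x : ℝ => Ψ (1 / x) + Ψ (Y / x))
      ((-1 / X ^ 2 - (-1 / X ^ 2) / (1 / X)) +
        (Y * (-1 / X ^ 2) - (Y * (-1 / X ^ 2)) / (Y / X))) X := by
    have := (((h1.sub_const 1).sub (h1.log hne1)).add ((h2.sub_const 1).sub (h2.log hne2)))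
    simpa [Ψ, Pi.add_def, Pi.sub_def] using this
  have h3 : HasDerivAt (fun y : ℝ => y / X) (1 / X) Y := by
    simpa using (hasDerivAt_id Y).div_const X
  have hne3 : Y / X ≠ 0 := hne2
  have hd2 : HasDerivAt (fun y : ℝ => Ψ (1 / X) + Ψ (y / X))
      (1 / X - (1 / X) / (Y / X)) Y := by
    have := ((h3.sub_const 1).sub (h3.log hne3)).const_add (Ψ (1 / X))
    simpa [Ψ] using this
  constructor
  · intro U
    rw [hd1.deriv, hd2.deriv]
    field_simp
    ring
  · intro hYX _
    have h4 : Y * (Y - X) < 0 := mul_neg_of_pos_of_neg hY (by linarith)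
    have h5 : -(X - 1) ^ 2 ≤ 0 := by nlinarith [sq_nonneg (X - 1)]
    exact div_neg_of_neg_of_pos (by linarith) hX
end

section
/- Along solutions of Ẋ = (1-Y)X, Ẏ = (X - Y²/X)Y (the predator-prey system with positive feedback U = Y²/X), the function V(X,Y) = Ψ(1/X) + Ψ(Y/X) satisfies V̇ = -(X-1)²/X - (Y-X)²·Y/X², which is negative for all (X,Y) ≠ (1,1) with X, Y > 0; moreover U = Y²/X > 0 on the whole quadrant. -/
theorem V_positive_backstepping (X Y : ℝ) (hX : 0 < X) (hY : 0 < Y) :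
    (deriv (fun x => Ψ (1 / x) + Ψ (Y / x)) X * ((1 - Y) * X)
      + deriv (fun y => Ψ (1 / X) + Ψ (y / X)) Y * ((X - Y ^ 2 / X) * Y)
      = -(X - 1) ^ 2 / X - (Y - X) ^ 2 * Y / X ^ 2)
    ∧ ((X, Y) ≠ (1, 1) → -(X - 1) ^ 2 / X - (Y - X) ^ 2 * Y / X ^ 2 < 0)
    ∧ 0 < Y ^ 2 / X := by
  have hX0 : X ≠ 0 := ne_of_gt hX
  have hY0 : Y ≠ 0 := ne_of_gt hY
  have hinv : HasDerivAt (fun x : ℝ => x⁻¹) (-(X ^ 2)⁻¹) X := hasDerivAt_inv hX0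
  have hlog1 : HasDerivAt (fun x : ℝ => Real.log x⁻¹) ((-(X ^ 2)⁻¹) / X⁻¹) X :=
    hinv.log (inv_ne_zero hX0)
  have hYx : HasDerivAt (fun x : ℝ => Y * x⁻¹) (Y * -(X ^ 2)⁻¹) X := hinv.const_mul Y
  have hlog2 : HasDerivAt (fun x : ℝ => Real.log (Y * x⁻¹))
      ((Y * -(X ^ 2)⁻¹) / (Y * X⁻¹)) X := hYx.log (mul_ne_zero hY0 (inv_ne_zero hX0))
  have hf : HasDerivAt (fun x => Ψ (1 / x) + Ψ (Y / x)) (-(1 + Y) / X ^ 2 + 2 / X) X := by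
    have h := ((hinv.sub_const 1).sub hlog1).add ((hYx.sub_const 1).sub hlog2)
    have he : (-(X ^ 2)⁻¹ - (-(X ^ 2)⁻¹) / X⁻¹) + (Y * -(X ^ 2)⁻¹ - (Y * -(X ^ 2)⁻¹) / (Y * X⁻¹))
        = -(1 + Y) / X ^ 2 + 2 / X := by field_simp; ring
    rw [← he]
    simpa [Ψ, one_div, div_eq_mul_inv, Pi.add_def, Pi.sub_def] using h
  have hyX : HasDerivAt (fun y : ℝ => y * X⁻¹) X⁻¹ Y := hasDerivAt_mul_const X⁻¹
  have hlog3 : HasDerivAt (fun y : ℝ => Real.log (y * X⁻¹)) (X⁻¹ / (Y * X⁻¹)) Y :=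
    hyX.log (mul_ne_zero hY0 (inv_ne_zero hX0))
  have hg : HasDerivAt (fun y => Ψ (1 / X) + Ψ (y / X)) (1 / X - 1 / Y) Y := by
    have h := ((hyX.sub_const 1).sub hlog3).const_add (X⁻¹ - 1 - Real.log X⁻¹)
    have he : X⁻¹ - X⁻¹ / (Y * X⁻¹) = 1 / X - 1 / Y := by field_simp
    rw [← he]
    simpa [Ψ, one_div, div_eq_mul_inv] using h
  refine ⟨?_, ?_, by positivity⟩
  · rw [hf.deriv, hg.deriv]
    field_simp
    ring
  · intro hne
    have hXY : X ≠ 1 ∨ Y ≠ 1 := by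
      by_contra h
      push_neg at h
      exact hne (by simp [h.1, h.2])
    have h1 : 0 ≤ (X - 1) ^ 2 / X := by positivity
    have h2 : 0 ≤ (Y - X) ^ 2 * Y / X ^ 2 := by positivity
    rcases hXY with h | h
    · have hp : 0 < (X - 1) ^ 2 / X := by
        have hne1 : X - 1 ≠ 0 := sub_ne_zero.mpr h
        positivity
      rw [neg_div]; linarith
    · rcases eq_or_ne X 1 with hX1 | hX1
      · have hne1 : Y - X ≠ 0 := by rw [hX1]; exact sub_ne_zero.mpr h
        have hp : 0 < (Y - X) ^ 2 * Y / X ^ 2 := by positivity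
        rw [neg_div]; linarith
      · have hp : 0 < (X - 1) ^ 2 / X := by
          have hne1 : X - 1 ≠ 0 := sub_ne_zero.mpr hX1
          positivity
        rw [neg_div]; linarith
end
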